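/- The transition probabilities for the number of distinct species satisfy P(P_{n,k+1}=p+1 | P_{n,k}=p) = (n-p)θ/(nθ+k) and P(P_{n,k+1}=p | P_{n,k}=p) = (pθ+k)/(nθ+k), and consequently the Bell polynomials B_{k,p}(θ) satisfy the triangular recurrence B_{k+1,p}(θ) = θ B_{k,p-1}(θ) + (pθ+k) B_{k,p}(θ), with B_{k,0}(θ)=B_{0,p}(θ)=0 for k,p ≥ 1 and B_{0,0}(θ)=1. -/

import Mathlib

open Finset Classical

/-- Rising factorial `(x)_k = x(x+1)⋯(x+k-1)`. -/
noncomputable def rf (x : ℝ) (k : ℕ) : ℝ := ∏ i ∈ Finset.range k, (x + i)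

/-- The Bell polynomial `B_{k,p}(θ)` in the variables `x_i = (θ)_i`. -/
noncomputable def BellP (θ : ℝ) (k p : ℕ) : ℝ :=
  ((k.factorial : ℝ) / (p.factorial : ℝ)) *
    ∑ b ∈ Finset.Nat.antidiagonalTuple p k,
      if ∀ q, 1 ≤ b q then ∏ q, rf θ (b q) / ((b q).factorial : ℝ) else 0

/-- Unconditional probability of a sample sequence of conditionally i.i.d.
draws from `Sₙ ~ D_n(θ)` (equivalently, the Pólya urn law). -/
noncomputable def sampleProb (θ : ℝ) {n k : ℕ} (m : Fin k → Fin n) : ℝ :=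
  (∏ c : Fin n, rf θ ((Finset.univ.filter fun l => m l = c).card)) /
    rf ((n : ℝ) * θ) k


lemma rf_succ (x : ℝ) (k : ℕ) : rf x (k+1) = rf x k * (x + k) := by
  simp [rf, Finset.prod_range_succ]

noncomputable def FF (θ : ℝ) (j : ℕ) : ℝ := rf θ j / (j.factorial : ℝ)

noncomputable def gF (θ : ℝ) {p : ℕ} (b : Fin p → ℕ) : ℝ :=
  if ∀ q, 1 ≤ b q then ∏ q, FF θ (b q) else 0

noncomputable def SB (θ : ℝ) (k p : ℕ) : ℝ :=
  ∑ b ∈ Finset.Nat.antidiagonalTuple p k, gF θ b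

lemma BellP_eq (θ : ℝ) (k p : ℕ) :
    BellP θ k p = ((k.factorial : ℝ) / (p.factorial : ℝ)) * SB θ k p := rfl

lemma FF_zero (θ : ℝ) : FF θ 0 = 1 := by simp [FF, rf]

lemma key_FF (θ : ℝ) (a : ℕ) : ((a:ℝ)+1) * FF θ (a+1) = (θ + a) * FF θ a := by
  have h1 : ((a.factorial : ℝ)) ≠ 0 := Nat.cast_ne_zero.2 a.factorial_ne_zero
  have h2 : ((a:ℝ)+1) ≠ 0 := by positivity
  unfold FF
  rw [rf_succ, Nat.factorial_succ]
  push_cast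
  field_simp

lemma stepB (θ : ℝ) (k p : ℕ) (q : Fin p) :
    ∑ b ∈ Finset.Nat.antidiagonalTuple p (k+1), (b q : ℝ) * gF θ b
      = ∑ b ∈ Finset.Nat.antidiagonalTuple p k,
          (if ∀ r, r ≠ q → 1 ≤ b r then (θ + b q) * ∏ r, FF θ (b r) else 0) := by
  have e1 : ∑ b ∈ (Finset.Nat.antidiagonalTuple p (k+1)).filter (fun b => 0 < b q),
      (b q : ℝ) * gF θ b = ∑ b ∈ Finset.Nat.antidiagonalTuple p (k+1), (b q : ℝ) * gF θ b :=
    Finset.sum_filter_of_ne (fun b _ hb => by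
      rcases Nat.eq_zero_or_pos (b q) with h0 | h
      · simp [h0] at hb
      · exact h)
  rw [← e1]
  refine (Finset.sum_nbij' (fun b => Function.update b q (b q + 1))
    (fun b => Function.update b q (b q - 1)) ?_ ?_ ?_ ?_ ?_).symm
  · intro b hb
    rw [Finset.Nat.mem_antidiagonalTuple] at hb
    rw [Finset.mem_filter, Finset.Nat.mem_antidiagonalTuple]
    rw [← Finset.add_sum_erase _ b (Finset.mem_univ q)] at hb
    refine ⟨?_, by simp⟩
    rw [Finset.sum_update_of_mem (Finset.mem_univ q), Finset.sdiff_singleton_eq_erase]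
    omega
  · intro b hb
    rw [Finset.mem_filter, Finset.Nat.mem_antidiagonalTuple] at hb
    obtain ⟨h1, h2⟩ := hb
    rw [Finset.Nat.mem_antidiagonalTuple]
    rw [← Finset.add_sum_erase _ b (Finset.mem_univ q)] at h1
    rw [Finset.sum_update_of_mem (Finset.mem_univ q), Finset.sdiff_singleton_eq_erase]
    omega
  · intro b _
    funext r
    rcases eq_or_ne r q with rfl | h
    · simp
    · simp [Function.update_of_ne h]
  · intro b hb
    rw [Finset.mem_filter] at hb
    funext r
    rcases eq_or_ne r q with rfl | h
    · simp
      omega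
    · simp [Function.update_of_ne h]
  · intro b _
    have hcond : (∀ r, 1 ≤ Function.update b q (b q + 1) r) ↔ (∀ r, r ≠ q → 1 ≤ b r) := by
      constructor
      · intro h r hr
        have := h r
        rwa [Function.update_of_ne hr] at this
      · intro h r
        rcases eq_or_ne r q with rfl | hr
        · simp
        · rw [Function.update_of_ne hr]; exact h r hr
    have h2 : (fun r => FF θ (Function.update b q (b q + 1) r)) =
        Function.update (fun r => FF θ (b r)) q (FF θ (b q + 1)) := by
      funext r
      rcases eq_or_ne r q with rfl | h
      · simp
      · simp [Function.update_of_ne h]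
    have hprod : ∏ r, FF θ (Function.update b q (b q + 1) r)
        = FF θ (b q + 1) * ∏ r ∈ Finset.univ.erase q, FF θ (b r) := by
      rw [show ∏ r, FF θ (Function.update b q (b q + 1) r)
          = ∏ r, Function.update (fun r => FF θ (b r)) q (FF θ (b q + 1)) r from by rw [h2]]
      rw [Finset.prod_update_of_mem (Finset.mem_univ q), Finset.sdiff_singleton_eq_erase]
    unfold gF
    rw [Function.update_self]
    by_cases hc : ∀ r, r ≠ q → 1 ≤ b r
    · rw [if_pos hc, if_pos (hcond.2 hc), hprod]
      push_cast
      rw [← mul_assoc, key_FF θ (b q), mul_assoc,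
        Finset.mul_prod_erase Finset.univ (fun r => FF θ (b r)) (Finset.mem_univ q)]
    · rw [if_neg hc, if_neg (fun hh => hc (hcond.1 hh)), mul_zero]

lemma hsplit (θ : ℝ) {p : ℕ} (q : Fin p) (b : Fin p → ℕ) :
    (if ∀ r, r ≠ q → 1 ≤ b r then (θ + b q) * ∏ r, FF θ (b r) else 0)
      = (if b q = 0 ∧ ∀ r, r ≠ q → 1 ≤ b r then θ * ∏ r, FF θ (b r) else 0)
        + (if ∀ r, 1 ≤ b r then (θ + b q) * ∏ r, FF θ (b r) else 0) := by
  by_cases h0 : b q = 0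
  · by_cases hc : ∀ r, r ≠ q → 1 ≤ b r
    · rw [if_pos hc, if_pos ⟨h0, hc⟩, if_neg (fun hh => by have := hh q; omega), h0]
      norm_num
    · rw [if_neg hc, if_neg (fun hh => hc hh.2),
        if_neg (fun hh => hc (fun r _ => hh r))]
      norm_num
  · by_cases hc : ∀ r, 1 ≤ b r
    · rw [if_pos (fun r _ => hc r), if_pos hc, if_neg (fun hh => h0 hh.1)]
      norm_num
    · rw [if_neg, if_neg (fun hh => h0 hh.1), if_neg hc]
      · norm_num
      · intro hh
        refine hc fun r => ?_
        rcases eq_or_ne r q with rfl | hr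
        · omega
        · exact hh r hr

lemma stepC (θ : ℝ) (k p' : ℕ) (q : Fin (p'+1)) :
    ∑ b ∈ Finset.Nat.antidiagonalTuple (p'+1) k,
      (if b q = 0 ∧ ∀ r, r ≠ q → 1 ≤ b r then θ * ∏ r, FF θ (b r) else 0)
    = θ * SB θ k p' := by
  rw [SB, Finset.mul_sum]
  have e1 : ∑ b ∈ (Finset.Nat.antidiagonalTuple (p'+1) k).filter (fun b => b q = 0),
      (if b q = 0 ∧ ∀ r, r ≠ q → 1 ≤ b r then θ * ∏ r, FF θ (b r) else 0)
      = ∑ b ∈ Finset.Nat.antidiagonalTuple (p'+1) k,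
      (if b q = 0 ∧ ∀ r, r ≠ q → 1 ≤ b r then θ * ∏ r, FF θ (b r) else 0) :=
    Finset.sum_filter_of_ne (fun b _ hb => by
      by_contra h0
      rw [if_neg (fun hh => h0 hh.1)] at hb
      exact hb rfl)
  rw [← e1]
  refine Finset.sum_nbij' (fun b => q.removeNth b) (fun c => q.insertNth 0 c) ?_ ?_ ?_ ?_ ?_
  · intro b hb
    rw [Finset.mem_filter, Finset.Nat.mem_antidiagonalTuple] at hb
    obtain ⟨h1, h0⟩ := hb
    rw [Finset.Nat.mem_antidiagonalTuple]
    rw [Fin.sum_univ_succAbove b q, h0, zero_add] at h1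
    exact h1
  · intro c hc
    rw [Finset.Nat.mem_antidiagonalTuple] at hc
    refine Finset.mem_filter.2 ⟨?_, by simp⟩
    rw [Finset.Nat.mem_antidiagonalTuple, Fin.sum_univ_succAbove _ q]
    simp [hc]
  · intro b hb
    rw [Finset.mem_filter] at hb
    rw [show (0:ℕ) = b q from hb.2.symm]
    exact Fin.insertNth_self_removeNth q b
  · intro c _
    exact Fin.removeNth_insertNth (α := fun _ : Fin (p'+1) => ℕ) q 0 c
  · intro b hb
    rw [Finset.mem_filter] at hb
    obtain ⟨_, h0⟩ := hb
    have hcond : (∀ r, r ≠ q → 1 ≤ b r) ↔ (∀ s, 1 ≤ q.removeNth b s) := by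
      constructor
      · intro h s
        exact h (q.succAbove s) (Fin.succAbove_ne q s)
      · intro h r hr
        obtain ⟨s, rfl⟩ := Fin.exists_succAbove_eq hr
        exact h s
    have hprod : ∏ r, FF θ (b r) = ∏ s, FF θ (q.removeNth b s) := by
      rw [Fin.prod_univ_succAbove (fun r => FF θ (b r)) q, h0, FF_zero, one_mul]
      rfl
    unfold gF
    by_cases hc : ∀ r, r ≠ q → 1 ≤ b r
    · rw [if_pos ⟨h0, hc⟩, if_pos (hcond.1 hc), hprod]
    · rw [if_neg (fun hh => hc hh.2), if_neg (fun hh => hc (hcond.2 hh)), mul_zero]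

lemma SB_rec (θ : ℝ) (k p' : ℕ) :
    ((k:ℝ)+1) * SB θ (k+1) (p'+1)
      = ((p':ℝ)+1) * θ * SB θ k p'
        + (((p':ℝ)+1) * θ + k) * SB θ k (p'+1) := by
  have hA : ((k:ℝ)+1) * SB θ (k+1) (p'+1)
      = ∑ q : Fin (p'+1), ∑ b ∈ Finset.Nat.antidiagonalTuple (p'+1) (k+1),
          (b q : ℝ) * gF θ b := by
    rw [SB, Finset.mul_sum, Finset.sum_comm]
    refine Finset.sum_congr rfl fun b hb => ?_
    rw [Finset.Nat.mem_antidiagonalTuple] at hb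
    rw [← Finset.sum_mul]
    congr 1
    rw [← Nat.cast_sum, hb]
    push_cast
    ring
  rw [hA]
  rw [Finset.sum_congr rfl fun q _ => stepB θ k (p'+1) q]
  rw [Finset.sum_congr rfl fun q _ =>
    Finset.sum_congr rfl fun b _ => hsplit θ q b]
  rw [Finset.sum_congr rfl fun q _ => Finset.sum_add_distrib]
  rw [Finset.sum_add_distrib]
  congr 1
  · rw [Finset.sum_congr rfl fun q _ => stepC θ k p' q]
    rw [Finset.sum_const, Finset.card_univ, Fintype.card_fin, nsmul_eq_mul]
    push_cast
    ring
  · rw [Finset.sum_comm]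
    have hq : ∀ b ∈ Finset.Nat.antidiagonalTuple (p'+1) k,
        ∑ q : Fin (p'+1), (if ∀ r, 1 ≤ b r then (θ + b q) * ∏ r, FF θ (b r) else 0)
          = (((p':ℝ)+1) * θ + k) * gF θ b := by
      intro b hb
      rw [Finset.Nat.mem_antidiagonalTuple] at hb
      unfold gF
      by_cases hc : ∀ r, 1 ≤ b r
      · simp only [if_pos hc]
        rw [← Finset.sum_mul]
        congr 1
        rw [Finset.sum_add_distrib, Finset.sum_const, Finset.card_univ, Fintype.card_fin,
          nsmul_eq_mul, ← Nat.cast_sum, hb]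
        push_cast
        ring
      · simp only [if_neg hc]
        simp
    rw [Finset.sum_congr rfl hq, SB, ← Finset.mul_sum]

lemma Bell_rec (θ : ℝ) (k p : ℕ) (hp : 1 ≤ p) :
    BellP θ (k+1) p = θ * BellP θ k (p-1) + ((p:ℝ)*θ + k) * BellP θ k p := by
  obtain ⟨p', rfl⟩ : ∃ p', p = p'+1 := ⟨p-1, by omega⟩
  simp only [Nat.add_sub_cancel]
  rw [BellP_eq, BellP_eq, BellP_eq]
  have h := SB_rec θ k p'
  have h1 : (p'.factorial : ℝ) ≠ 0 := Nat.cast_ne_zero.2 p'.factorial_ne_zero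
  have h2 : (k.factorial : ℝ) ≠ 0 := Nat.cast_ne_zero.2 k.factorial_ne_zero
  have h3 : ((p':ℝ)+1) ≠ 0 := by positivity
  rw [Nat.factorial_succ k, Nat.factorial_succ p']
  push_cast
  field_simp
  linear_combination h

def cnt {n k : ℕ} (m : Fin k → Fin n) (c : Fin n) : ℕ :=
  (Finset.univ.filter fun l => m l = c).card

lemma cnt_snoc {n k : ℕ} (m : Fin k → Fin n) (c : Fin n) :
    cnt (Fin.snoc m c) = Function.update (cnt m) c (cnt m c + 1) := by
  funext c'
  have h1 : cnt (Fin.snoc m c) c' = cnt m c' + (if c = c' then 1 else 0) := by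
    simp only [cnt, Finset.card_filter]
    rw [Fin.sum_univ_castSucc]
    simp [Fin.snoc_castSucc, Fin.snoc_last]
  rw [h1]
  rcases eq_or_ne c' c with rfl | h
  · simp
  · simp [Function.update_of_ne h, Ne.symm h]

lemma sampleProb_def (θ : ℝ) {n k : ℕ} (m : Fin k → Fin n) :
    sampleProb θ m = (∏ c : Fin n, rf θ (cnt m c)) / rf ((n : ℝ) * θ) k := rfl

lemma sampleProb_snoc (θ : ℝ) {n k : ℕ} (m : Fin k → Fin n) (c : Fin n) :
    sampleProb θ (Fin.snoc m c) =
      ((θ + cnt m c) / ((n : ℝ) * θ + k)) * sampleProb θ m := by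
  rw [sampleProb_def, sampleProb_def, cnt_snoc, rf_succ]
  have h2 : (fun c' => rf θ (Function.update (cnt m) c (cnt m c + 1) c')) =
      Function.update (fun c' => rf θ (cnt m c')) c (rf θ (cnt m c + 1)) := by
    funext c'
    rcases eq_or_ne c' c with rfl | h
    · simp
    · simp [Function.update_of_ne h]
  rw [show (∏ c' : Fin n, rf θ (Function.update (cnt m) c (cnt m c + 1) c')) =
      ∏ c' : Fin n, Function.update (fun c' => rf θ (cnt m c')) c (rf θ (cnt m c + 1)) c'
    from by rw [h2]]
  rw [Finset.prod_update_of_mem (Finset.mem_univ c), rf_succ]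
  rw [← Finset.mul_prod_erase Finset.univ (fun c' => rf θ (cnt m c')) (Finset.mem_univ c),
    Finset.sdiff_singleton_eq_erase]
  rw [div_mul_div_comm]
  ring

def snocEquiv (n k : ℕ) : ((Fin k → Fin n) × Fin n) ≃ (Fin (k+1) → Fin n) where
  toFun p := Fin.snoc p.1 p.2
  invFun m := (fun i => m i.castSucc, m (Fin.last k))
  left_inv := by rintro ⟨m, c⟩; simp
  right_inv := by intro m; exact Fin.snoc_init_self m

lemma sum_snoc {n k : ℕ} (F : (Fin (k+1) → Fin n) → ℝ) :
    ∑ m', F m' = ∑ m : Fin k → Fin n, ∑ c : Fin n, F (Fin.snoc m c) := by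
  rw [← Equiv.sum_comp (snocEquiv n k) F, Fintype.sum_prod_type]
  rfl

lemma image_snoc {n k : ℕ} (m : Fin k → Fin n) (c : Fin n) :
    Finset.univ.image (Fin.snoc m c : Fin (k+1) → Fin n) = insert c (Finset.univ.image m) := by
  ext x
  simp only [Finset.mem_image, Finset.mem_insert, Finset.mem_univ, true_and]
  constructor
  · rintro ⟨l, hl⟩
    induction l using Fin.lastCases with
    | last => left; rw [← hl]; simp
    | cast i => right; exact ⟨i, by simpa using hl⟩
  · rintro (rfl | ⟨l, hl⟩)
    · exact ⟨Fin.last k, by simp⟩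
    · exact ⟨l.castSucc, by simpa using hl⟩

lemma comp_snoc_castSucc {n k : ℕ} (m : Fin k → Fin n) (c : Fin n) :
    (fun l : Fin k => (Fin.snoc m c : Fin (k+1) → Fin n) l.castSucc) = m := by
  funext l; simp

lemma cnt_eq_zero {n k : ℕ} (m : Fin k → Fin n) (c : Fin n)
    (h : c ∉ Finset.univ.image m) : cnt m c = 0 := by
  simp only [cnt, Finset.card_eq_zero, Finset.filter_eq_empty_iff]
  exact fun l _ hl => h (Finset.mem_image.2 ⟨l, Finset.mem_univ _, hl⟩)

lemma sum_cnt {n k : ℕ} (m : Fin k → Fin n) : ∑ c, cnt m c = k := by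
  have := Finset.card_eq_sum_card_fiberwise (s := (Finset.univ : Finset (Fin k)))
    (t := (Finset.univ : Finset (Fin n))) (f := m) (fun x _ => Finset.mem_univ _)
  simpa [cnt] using this.symm

theorem prob1 (θ : ℝ) (n k p : ℕ) (hpn : p ≤ n) :
    (∑ m : Fin (k + 1) → Fin n,
        if (Finset.univ.image fun l : Fin k => m l.castSucc).card = p ∧
            (Finset.univ.image m).card = p + 1
        then sampleProb θ m else 0) =
      (((n : ℝ) - p) * θ / ((n : ℝ) * θ + k)) *
        ∑ m : Fin k → Fin n,
          if (Finset.univ.image m).card = p then sampleProb θ m else 0 := by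
  rw [sum_snoc, Finset.mul_sum]
  refine Finset.sum_congr rfl fun m _ => ?_
  by_cases h : (Finset.univ.image m).card = p
  · rw [if_pos h]
    have step : ∀ c : Fin n, (if (Finset.univ.image fun l : Fin k => (Fin.snoc m c : Fin (k+1) → Fin n) l.castSucc).card = p ∧
            (Finset.univ.image (Fin.snoc m c : Fin (k+1) → Fin n)).card = p + 1
        then sampleProb θ (Fin.snoc m c) else 0) =
        (if c ∉ Finset.univ.image m then (θ / ((n : ℝ) * θ + k)) * sampleProb θ m else 0) := by
      intro c
      rw [comp_snoc_castSucc, image_snoc, sampleProb_snoc]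
      by_cases hc : c ∈ Finset.univ.image m
      · rw [if_neg, if_neg]
        · simp [hc]
        · rw [Finset.insert_eq_self.2 hc, h]
          simp
      · rw [if_pos hc, if_pos ⟨h, by rw [Finset.card_insert_of_notMem hc, h]⟩,
          cnt_eq_zero m c hc]
        norm_num
    rw [Finset.sum_congr rfl fun c _ => step c]
    rw [← Finset.sum_filter]
    rw [Finset.sum_const]
    have hfc : Finset.filter (fun c => c ∉ Finset.univ.image m) Finset.univ
        = (Finset.univ.image m)ᶜ := by
      ext c; simp
    rw [hfc, Finset.card_compl, h, Fintype.card_fin, nsmul_eq_mul,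
      Nat.cast_sub hpn]
    ring
  · rw [if_neg h]
    rw [Finset.sum_eq_zero fun c _ => ?_]
    · ring
    · rw [if_neg]
      rw [comp_snoc_castSucc]
      tauto

theorem prob2 (θ : ℝ) (n k p : ℕ) :
    (∑ m : Fin (k + 1) → Fin n,
        if (Finset.univ.image fun l : Fin k => m l.castSucc).card = p ∧
            (Finset.univ.image m).card = p
        then sampleProb θ m else 0) =
      (((p : ℝ) * θ + k) / ((n : ℝ) * θ + k)) *
        ∑ m : Fin k → Fin n,
          if (Finset.univ.image m).card = p then sampleProb θ m else 0 := by
  rw [sum_snoc, Finset.mul_sum]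
  refine Finset.sum_congr rfl fun m _ => ?_
  by_cases h : (Finset.univ.image m).card = p
  · rw [if_pos h]
    have step : ∀ c : Fin n, (if (Finset.univ.image fun l : Fin k => (Fin.snoc m c : Fin (k+1) → Fin n) l.castSucc).card = p ∧
            (Finset.univ.image (Fin.snoc m c : Fin (k+1) → Fin n)).card = p
        then sampleProb θ (Fin.snoc m c) else 0) =
        (if c ∈ Finset.univ.image m
          then ((θ + cnt m c) / ((n : ℝ) * θ + k)) * sampleProb θ m else 0) := by
      intro c
      rw [comp_snoc_castSucc, image_snoc, sampleProb_snoc]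
      by_cases hc : c ∈ Finset.univ.image m
      · rw [if_pos ⟨h, by rw [Finset.insert_eq_self.2 hc, h]⟩, if_pos hc]
      · rw [if_neg, if_neg hc]
        rw [Finset.card_insert_of_notMem hc, h]
        simp
    rw [Finset.sum_congr rfl fun c _ => step c, Finset.sum_ite_mem, Finset.univ_inter]
    have hsum2 : ∑ c ∈ Finset.univ.image m, (θ + (cnt m c : ℝ)) = p * θ + k := by
      rw [Finset.sum_add_distrib, Finset.sum_const, h, nsmul_eq_mul]
      congr 1
      rw [show ∑ c ∈ Finset.univ.image m, ((cnt m c : ℝ))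
          = ((∑ c ∈ Finset.univ.image m, cnt m c : ℕ) : ℝ) from (Nat.cast_sum _ _).symm]
      rw [Finset.sum_subset (Finset.subset_univ _)
        (fun c _ hc => by rw [cnt_eq_zero m c hc]), sum_cnt]
    have step2 : ∀ c : Fin n, ((θ + (cnt m c : ℝ)) / ((n : ℝ) * θ + k)) * sampleProb θ m
        = (θ + (cnt m c : ℝ)) * (sampleProb θ m / ((n : ℝ) * θ + k)) := fun c => by ring
    rw [Finset.sum_congr rfl fun c _ => step2 c, ← Finset.sum_mul, hsum2]
    ring
  · rw [if_neg h]
    rw [Finset.sum_eq_zero fun c _ => ?_]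
    · ring
    · rw [if_neg]
      rw [comp_snoc_castSucc]
      tauto

/-- Transition probabilities of the number of distinct visited species, and the
resulting triangular recurrence and boundary conditions for the Bell
polynomials `B_{k,p}(θ)`. -/
theorem distinct_species_transitions_and_Bell_recurrence (θ : ℝ) (hθ : 0 < θ)
    (n k p : ℕ) (hpn : p ≤ n) :
    ((∑ m : Fin (k + 1) → Fin n,
        if (Finset.univ.image fun l : Fin k => m l.castSucc).card = p ∧
            (Finset.univ.image m).card = p + 1
        then sampleProb θ m else 0) =
      (((n : ℝ) - p) * θ / ((n : ℝ) * θ + k)) *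
        ∑ m : Fin k → Fin n,
          if (Finset.univ.image m).card = p then sampleProb θ m else 0) ∧
    ((∑ m : Fin (k + 1) → Fin n,
        if (Finset.univ.image fun l : Fin k => m l.castSucc).card = p ∧
            (Finset.univ.image m).card = p
        then sampleProb θ m else 0) =
      (((p : ℝ) * θ + k) / ((n : ℝ) * θ + k)) *
        ∑ m : Fin k → Fin n,
          if (Finset.univ.image m).card = p then sampleProb θ m else 0) ∧
    (1 ≤ p → BellP θ (k + 1) p =
      θ * BellP θ k (p - 1) + ((p : ℝ) * θ + k) * BellP θ k p) ∧
    (1 ≤ k → BellP θ k 0 = 0) ∧ (1 ≤ p → BellP θ 0 p = 0) ∧ BellP θ 0 0 = 1 := by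
  refine ⟨prob1 θ n k p hpn, prob2 θ n k p, Bell_rec θ k p, fun hk => ?_, fun hp => ?_, ?_⟩
  · unfold BellP
    rw [show Finset.Nat.antidiagonalTuple 0 k = ∅ from ?_]
    · simp
    · ext b
      simp [Finset.Nat.mem_antidiagonalTuple]
      omega
  · unfold BellP
    rw [Finset.sum_eq_zero]
    · simp
    intro b hb
    rw [Finset.Nat.mem_antidiagonalTuple] at hb
    rw [if_neg]
    intro h
    have h1 := h ⟨0, hp⟩
    have h2 : 1 ≤ ∑ q, b q := le_trans h1
      (Finset.single_le_sum (f := fun q => b q) (fun _ _ => Nat.zero_le _) (Finset.mem_univ _))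
    omega
  · simp [BellP]
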